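/- Let X be a topological space and let p : X × X × X → X be a continuous map which is a Mal'tsev operation (p (x, y, y) = x and p (y, y, x) = x for all x, y) satisfying the Pixley axiom p (x, y, x) = x for all x, y. Then for every point x₀ of X the fundamental group of X at x₀ is trivial (FundamentalGroup X x₀ is a subsingleton). -/

import Mathlib

open unitInterval

/-- Every loop in a topological Pixley–Mal'tsev algebra is nullhomotopic. -/
theorem loop_nullhomotopic_of_pixley_maltsev
    {X : Type*} [TopologicalSpace X] (p : X × X × X → X)
    (hc : Continuous p)
    (h1 : ∀ x y, p (x, y, y) = x) (h2 : ∀ x y, p (y, y, x) = x)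
    (hpix : ∀ x y, p (x, y, x) = x)
    (x₀ : X) (γ : Path x₀ x₀) : γ.Homotopic (Path.refl x₀) := by
  refine ⟨{ toFun := fun st => p (γ st.2, γ.extend ((st.1 : ℝ) * st.2), x₀),
            continuous_toFun := ?_, map_zero_left := ?_, map_one_left := ?_,
            prop' := ?_ }⟩
  · apply hc.comp
    refine Continuous.prodMk (γ.continuous.comp continuous_snd) ?_
    exact (γ.continuous_extend.comp
      ((continuous_subtype_val.comp continuous_fst).mul
        (continuous_subtype_val.comp continuous_snd))).prodMk continuous_const
  · intro t
    simp [h1]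
  · intro t
    have : ((1 : I) : ℝ) * (t : ℝ) = (t : ℝ) := by norm_num
    simp [this, γ.extend_extends' , h2]
  · intro s t ht
    simp only [Set.mem_insert_iff, Set.mem_singleton_iff] at ht
    rcases ht with rfl | rfl
    · simp [hpix]
    · simp only [ContinuousMap.coe_mk, Path.coe_toContinuousMap]
      have h1' : ((1 : I) : ℝ) = (1 : ℝ) := rfl
      simp [h1', hpix]

/-- the fundamental group, at any point, of a topological Mal'tsev
algebra satisfying the Pixley axiom is trivial. -/
theorem fundamentalGroup_of_topological_pixley_maltsev_trivial
    {X : Type*} [TopologicalSpace X] (p : X × X × X → X)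
    (hc : Continuous p)
    (h1 : ∀ x y, p (x, y, y) = x) (h2 : ∀ x y, p (y, y, x) = x)
    (hpix : ∀ x y, p (x, y, x) = x) :
    ∀ x₀ : X, Subsingleton (FundamentalGroup X x₀) := by
  intro x₀
  have key : ∀ γ : Path x₀ x₀, γ.Homotopic (Path.refl x₀) :=
    loop_nullhomotopic_of_pixley_maltsev p hc h1 h2 hpix x₀
  constructor
  intro a b
  have : ∀ q : Path.Homotopic.Quotient x₀ x₀, q = ⟦Path.refl x₀⟧ := by
    intro q
    induction q using Quotient.ind with
    | _ γ => exact Quotient.sound (key γ)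
  show FundamentalGroup.toPath a = FundamentalGroup.toPath b
  rw [this (FundamentalGroup.toPath a), this (FundamentalGroup.toPath b)]
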